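/- arXiv:1501.07141 — 2 statements merged into one kernel-verified Lean document; each statement's English description precedes it below -/
import Mathlib

section
/- For all real a ≤ b, 2∫_a^b G(x) dx = Φ(b) - Φ(a) + b·G(b) - a·G(a), where G(x) = φ(x) - x(1 - Φ(x)). -/
noncomputable def phi (x : ℝ) : ℝ := (Real.sqrt (2 * Real.pi))⁻¹ * Real.exp (-x ^ 2 / 2)

noncomputable def Phi (x : ℝ) : ℝ := ∫ t in Set.Iic x, phi t

noncomputable def G (x : ℝ) : ℝ := phi x - x * (1 - Phi x)

lemma phi_integrable : MeasureTheory.Integrable phi := by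
  have h : MeasureTheory.Integrable fun x : ℝ => Real.exp (-(1/2 : ℝ) * x ^ 2) :=
    integrable_exp_neg_mul_sq (by norm_num)
  have := h.const_mul (Real.sqrt (2 * Real.pi))⁻¹
  refine this.congr (Filter.Eventually.of_forall fun x => ?_)
  simp only [phi]
  ring_nf

lemma phi_continuous : Continuous phi := by
  unfold phi; fun_prop

lemma hasDerivAt_Phi (x : ℝ) : HasDerivAt Phi (phi x) x := by
  have key : ∀ y : ℝ, Phi y = Phi 0 + ∫ t in (0:ℝ)..y, phi t := by
    intro y
    have := intervalIntegral.integral_Iic_sub_Iic (phi_integrable.integrableOn (s := Set.Iic (0:ℝ)))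
      (phi_integrable.integrableOn (s := Set.Iic y))
    simp only [Phi]
    linarith [this]
  have h0 : HasDerivAt (fun u => ∫ t in (0:ℝ)..u, phi t) (phi x) x :=
    (intervalIntegral.integral_hasStrictDerivAt_right
      (phi_integrable.intervalIntegrable (a := 0) (b := x))
      (phi_integrable.aestronglyMeasurable.stronglyMeasurableAtFilter (l := nhds x))
      (phi_continuous.continuousAt (x := x))).hasDerivAt
  have h := h0.const_add (Phi 0)
  exact h.congr_of_eventuallyEq (Filter.Eventually.of_forall key)

lemma hasDerivAt_phi (x : ℝ) : HasDerivAt phi (-x * phi x) x := by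
  have h1 : HasDerivAt (fun y : ℝ => -y ^ 2 / 2) (-x) x := by
    have := ((hasDerivAt_pow 2 x).neg).div_const 2
    exact this.congr_deriv (by norm_num; ring)
  have := (h1.exp).const_mul (Real.sqrt (2 * Real.pi))⁻¹
  refine this.congr_deriv ?_
  simp [phi]; ring

lemma Phi_continuous : Continuous Phi :=
  continuous_iff_continuousAt.2 fun x => (hasDerivAt_Phi x).continuousAt

lemma G_continuous : Continuous G := by
  unfold G
  exact phi_continuous.sub (continuous_id.mul (continuous_const.sub Phi_continuous))

lemma hasDerivAt_G (x : ℝ) : HasDerivAt G (Phi x - 1) x := by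
  have h := (hasDerivAt_phi x).sub
    ((hasDerivAt_id x).mul ((hasDerivAt_Phi x).const_sub 1))
  refine h.congr_deriv ?_
  simp only [id_eq]; ring

/-- `2∫_a^b G(x) dx = Φ(b) - Φ(a) + b G(b) - a G(a)` for `a ≤ b`. -/
theorem loss_function_integral (a b : ℝ) (hab : a ≤ b) :
    2 * ∫ x in a..b, G x = Phi b - Phi a + b * G b - a * G a := by
  have hF : ∀ x ∈ Set.uIcc a b, HasDerivAt (fun y => y * G y) (2 * G x - phi x) x := by
    intro x _
    have h := (hasDerivAt_id x).mul (hasDerivAt_G x)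
    refine h.congr_deriv ?_
    simp only [G, id_eq]; ring
  have hcont : ContinuousOn (fun x => 2 * G x - phi x) (Set.uIcc a b) :=
    ((continuous_const.mul G_continuous).sub phi_continuous).continuousOn
  have hftc := intervalIntegral.integral_eq_sub_of_hasDerivAt hF
    (hcont.intervalIntegrable)
  have hGint : IntervalIntegrable G MeasureTheory.volume a b :=
    G_continuous.intervalIntegrable a b
  have hphiint : IntervalIntegrable phi MeasureTheory.volume a b :=
    phi_continuous.intervalIntegrable a b
  have hsplit : (∫ x in a..b, (2 * G x - phi x)) =
      2 * (∫ x in a..b, G x) - ∫ x in a..b, phi x := by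
    rw [intervalIntegral.integral_sub ((hGint.const_mul 2)) hphiint,
      intervalIntegral.integral_const_mul]
  have hPhi : (∫ x in a..b, phi x) = Phi b - Phi a := by
    simp only [Phi]
    exact (intervalIntegral.integral_Iic_sub_Iic (phi_integrable.integrableOn)
      (phi_integrable.integrableOn)).symm
  rw [hsplit, hPhi] at hftc
  linarith [hftc]
end

section
/- For all x ≥ 0, x·φ(x) + (1 - Φ(x)) ≤ 1/2, where φ and Φ are the standard normal density and CDF. -/
open MeasureTheory Set

lemma phi_eq_gauss : phi = ProbabilityTheory.gaussianPDFReal 0 1 := by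
  funext x
  simp [phi, ProbabilityTheory.gaussianPDFReal]

lemma phi_integrable_s17 : Integrable phi := by
  rw [phi_eq_gauss]; exact ProbabilityTheory.integrable_gaussianPDFReal 0 1

lemma phi_nonneg (x : ℝ) : 0 ≤ phi x := by
  rw [phi_eq_gauss]; exact ProbabilityTheory.gaussianPDFReal_nonneg 0 1 x

lemma phi_total : ∫ x, phi x = 1 := by
  rw [phi_eq_gauss]; exact ProbabilityTheory.integral_gaussianPDFReal_eq_one 0 one_ne_zero

lemma phi_neg (x : ℝ) : phi (-x) = phi x := by simp [phi]

lemma Phi_zero : Phi 0 = 1/2 := by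
  have h1 : (∫ t in Iic (0:ℝ), phi t) + ∫ t in Ioi (0:ℝ), phi t = 1 := by
    rw [intervalIntegral.integral_Iic_add_Ioi phi_integrable_s17.integrableOn phi_integrable_s17.integrableOn]
    exact phi_total
  have h2 : (∫ t in Iic (0:ℝ), phi t) = ∫ t in Ioi (0:ℝ), phi t := by
    rw [show (Ioi (0:ℝ)) = Ioi (-(0:ℝ)) by norm_num, ← integral_comp_neg_Iic]
    simp [phi_neg]
  unfold Phi
  linarith

/-- For all `x ≥ 0`, `x φ(x) + (1 - Φ(x)) ≤ 1/2`. -/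
theorem xphi_add_tail_le_half (x : ℝ) (hx : 0 ≤ x) :
    x * phi x + (1 - Phi x) ≤ 1/2 := by
  have hsplit : Phi x = Phi 0 + ∫ t in Ioc 0 x, phi t := by
    unfold Phi
    rw [← setIntegral_union (Iic_disjoint_Ioc le_rfl) measurableSet_Ioc
      phi_integrable_s17.integrableOn phi_integrable_s17.integrableOn, Iic_union_Ioc_eq_Iic hx]
  have hlb : x * phi x ≤ ∫ t in Ioc 0 x, phi t := by
    have : x * phi x = ∫ _t in Ioc 0 x, phi x := by
      rw [setIntegral_const, Real.volume_real_Ioc_of_le hx, sub_zero, smul_eq_mul]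
    rw [this]
    apply setIntegral_mono_on (integrableOn_const (by simp [Real.volume_Ioc]))
      phi_integrable_s17.integrableOn measurableSet_Ioc
    intro t ht
    have ht0 : 0 ≤ t := le_of_lt ht.1
    have : t ^ 2 ≤ x ^ 2 := pow_le_pow_left₀ ht0 ht.2 2
    unfold phi
    gcongr
  rw [hsplit, Phi_zero]
  linarith
end
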